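/- arXiv:2205.13616 — 4 statements merged into one kernel-verified Lean document; each statement's English description precedes it below -/
import Mathlib

section
/- Let t ∈ (0,1), k > 1. Let Σ_S be a positive definite p₁×p₁ matrix and Σ_{S^C} a positive definite p₂×p₂ matrix. Let M_b be the block diagonal matrix diag(Σ_S, Σ_{S^C}) and M_a = diag(k⁻¹Σ_S, kΣ_{S^C}). Let β_b = (u, 0) and β_a = (0, v) for u ∈ ℝ^{p₁}, v ∈ ℝ^{p₂}. Then the matrix M := (1-t)M_b + t·M_a is invertible and M⁻¹((1-t)M_b β_b + t M_a β_a) equals the block vector with first block [t k⁻¹ + (1-t)]⁻¹(1-t)·u and second block [tk + (1-t)]⁻¹ k t·v. -/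
open Matrix

theorem stmt_1 (p₁ p₂ : ℕ) (t k : ℝ) (ht : t ∈ Set.Ioo (0:ℝ) 1) (hk : 1 < k)
    (SigS : Matrix (Fin p₁) (Fin p₁) ℝ) (SigSC : Matrix (Fin p₂) (Fin p₂) ℝ)
    (hS : SigS.PosDef) (hSC : SigSC.PosDef)
    (u : Fin p₁ → ℝ) (v : Fin p₂ → ℝ)
    (Mb : Matrix (Fin p₁ ⊕ Fin p₂) (Fin p₁ ⊕ Fin p₂) ℝ)
    (hMb : Mb = Matrix.fromBlocks SigS 0 0 SigSC)
    (Ma : Matrix (Fin p₁ ⊕ Fin p₂) (Fin p₁ ⊕ Fin p₂) ℝ)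
    (hMa : Ma = Matrix.fromBlocks (k⁻¹ • SigS) 0 0 (k • SigSC))
    (βb βa : Fin p₁ ⊕ Fin p₂ → ℝ)
    (hβb : βb = Sum.elim u (0 : Fin p₂ → ℝ)) (hβa : βa = Sum.elim (0 : Fin p₁ → ℝ) v)
    (M : Matrix (Fin p₁ ⊕ Fin p₂) (Fin p₁ ⊕ Fin p₂) ℝ)
    (hM : M = (1 - t) • Mb + t • Ma) :
    IsUnit M.det ∧
      M⁻¹ *ᵥ ((1 - t) • (Mb *ᵥ βb) + t • (Ma *ᵥ βa)) =
        Sum.elim (((t * k⁻¹ + (1 - t))⁻¹ * (1 - t)) • u)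
          (((t * k + (1 - t))⁻¹ * (k * t)) • v) := by
  obtain ⟨ht0, ht1⟩ := ht
  have hk0 : (0:ℝ) < k := lt_trans one_pos hk
  have ht1' : 0 < 1 - t := by linarith
  set a : ℝ := t * k⁻¹ + (1 - t) with ha
  set b : ℝ := t * k + (1 - t) with hb
  have ha0 : 0 < a := add_pos (mul_pos ht0 (inv_pos.2 hk0)) ht1'
  have hb0 : 0 < b := add_pos (mul_pos ht0 hk0) ht1'
  have hM' : M = Matrix.fromBlocks (a • SigS) 0 0 (b • SigSC) := by
    subst hM hMb hMa
    ext i j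
    cases i <;> cases j <;>
      simp [Matrix.fromBlocks, Matrix.add_apply, Matrix.smul_apply, ha, hb] <;> ring
  have hdet : IsUnit M.det := by
    rw [hM', Matrix.det_fromBlocks_zero₁₂, Matrix.det_smul, Matrix.det_smul]
    exact (mul_pos (mul_pos (pow_pos ha0 _) hS.det_pos)
      (mul_pos (pow_pos hb0 _) hSC.det_pos)).ne'.isUnit
  refine ⟨hdet, ?_⟩
  set x : Fin p₁ ⊕ Fin p₂ → ℝ :=
    Sum.elim ((a⁻¹ * (1 - t)) • u) ((b⁻¹ * (k * t)) • v) with hx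
  have hMx : M *ᵥ x = (1 - t) • (Mb *ᵥ βb) + t • (Ma *ᵥ βa) := by
    rw [hM', hx, Matrix.fromBlocks_mulVec]
    subst hMb hMa hβb hβa
    rw [Matrix.fromBlocks_mulVec, Matrix.fromBlocks_mulVec]
    funext i
    have hane : a ≠ 0 := ha0.ne'
    have hbne : b ≠ 0 := hb0.ne'
    cases i <;>
      simp [Matrix.mulVec_smul, Matrix.smul_mulVec, smul_smul]
    · exact Or.inl (by field_simp)
    · field_simp
  rw [← hMx, Matrix.mulVec_mulVec, Matrix.nonsing_inv_mul M hdet, Matrix.one_mulVec, hx]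
end

section
/- With the setup of the poisoned least-squares estimator: let t ∈ (0,1), k > 1, Σ_S, Σ_{S^C} positive definite, β_b = (u,0), β_a = (0,v), a = uᵀΣ_S u > 0, b = vᵀΣ_{S^C} v > 0, and β̂ the block vector with blocks [t/k + (1-t)]⁻¹(1-t)·u and [tk + (1-t)]⁻¹ kt·v. Then (β̂ - β_b)ᵀ M_b (β̂ - β_b) / a = (t/k / (t/k + 1-t))² + (tk/(tk + 1-t))² · (b/a), where M_b = diag(Σ_S, Σ_{S^C}). -/
open Matrix

theorem stmt_2 (p₁ p₂ : ℕ) (t k : ℝ) (ht : t ∈ Set.Ioo (0:ℝ) 1) (hk : 1 < k)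
    (SigS : Matrix (Fin p₁) (Fin p₁) ℝ) (SigSC : Matrix (Fin p₂) (Fin p₂) ℝ)
    (hS : SigS.PosDef) (hSC : SigSC.PosDef)
    (u : Fin p₁ → ℝ) (v : Fin p₂ → ℝ) (a b : ℝ)
    (ha : a = u ⬝ᵥ (SigS *ᵥ u)) (hb : b = v ⬝ᵥ (SigSC *ᵥ v))
    (ha0 : 0 < a) (hb0 : 0 < b)
    (βb : Fin p₁ ⊕ Fin p₂ → ℝ) (hβb : βb = Sum.elim u (0 : Fin p₂ → ℝ))
    (βhat : Fin p₁ ⊕ Fin p₂ → ℝ)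
    (hβhat : βhat = Sum.elim (((t / k + (1 - t))⁻¹ * (1 - t)) • u)
      (((t * k + (1 - t))⁻¹ * (k * t)) • v))
    (Mb : Matrix (Fin p₁ ⊕ Fin p₂) (Fin p₁ ⊕ Fin p₂) ℝ)
    (hMb : Mb = Matrix.fromBlocks SigS 0 0 SigSC) :
    (βhat - βb) ⬝ᵥ (Mb *ᵥ (βhat - βb)) / a =
      (t / k / (t / k + (1 - t)))^2 + (t * k / (t * k + (1 - t)))^2 * (b / a) := by
  obtain ⟨ht0, ht1⟩ := ht
  have hk0 : (0:ℝ) < k := lt_trans one_pos hk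
  have h1t : (0:ℝ) < 1 - t := by linarith
  have hd1 : (0:ℝ) < t / k + (1 - t) := by positivity
  have hd2 : (0:ℝ) < t * k + (1 - t) := by positivity
  set c1 : ℝ := (t / k + (1 - t))⁻¹ * (1 - t) - 1 with hc1
  set c2 : ℝ := (t * k + (1 - t))⁻¹ * (k * t) with hc2
  have hdiff : βhat - βb = Sum.elim (c1 • u) (c2 • v) := by
    subst hβhat hβb
    funext x
    cases x with
    | inl i => simp [hc1, sub_mul]
    | inr i => simp
  rw [hdiff, hMb, fromBlocks_mulVec, dotProduct_block]
  simp only [Sum.elim_comp_inl, Sum.elim_comp_inr, Matrix.zero_mulVec, add_zero,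
    zero_add, smul_zero, Matrix.mulVec_smul, smul_dotProduct, dotProduct_smul, smul_eq_mul]
  rw [← ha, ← hb]
  have key : c1 = -(t / k / (t / k + (1 - t))) := by
    rw [hc1]; field_simp; ring
  have key2 : c2 = t * k / (t * k + (1 - t)) := by
    rw [hc2]; field_simp
  rw [key, key2]
  field_simp
end

section
/- With the same setup (t ∈ (0,1), k > 1, positive definite Σ_S, Σ_{S^C}, β_b = (u,0), β_a = (0,v), a = uᵀΣ_S u > 0, b = vᵀΣ_{S^C} v > 0, β̂ with blocks [t/k+(1-t)]⁻¹(1-t)u and [tk+(1-t)]⁻¹ktv), if additionally a/b ≥ K1 for some K1 > 0, then (β̂ - β_b)ᵀ M_b (β̂ - β_b) / a ≤ (t/k / (t/k + 1-t))² + (tk/(tk + 1-t))² / K1. -/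
open Matrix

theorem stmt_3 (p₁ p₂ : ℕ) (t k K1 : ℝ) (ht : t ∈ Set.Ioo (0:ℝ) 1) (hk : 1 < k)
    (hK1 : 0 < K1)
    (SigS : Matrix (Fin p₁) (Fin p₁) ℝ) (SigSC : Matrix (Fin p₂) (Fin p₂) ℝ)
    (hS : SigS.PosDef) (hSC : SigSC.PosDef)
    (u : Fin p₁ → ℝ) (v : Fin p₂ → ℝ) (a b : ℝ)
    (ha : a = u ⬝ᵥ (SigS *ᵥ u)) (hb : b = v ⬝ᵥ (SigSC *ᵥ v))
    (ha0 : 0 < a) (hb0 : 0 < b) (hbenign : a / b ≥ K1)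
    (βb : Fin p₁ ⊕ Fin p₂ → ℝ) (hβb : βb = Sum.elim u (0 : Fin p₂ → ℝ))
    (βhat : Fin p₁ ⊕ Fin p₂ → ℝ)
    (hβhat : βhat = Sum.elim (((t / k + (1 - t))⁻¹ * (1 - t)) • u)
      (((t * k + (1 - t))⁻¹ * (k * t)) • v))
    (Mb : Matrix (Fin p₁ ⊕ Fin p₂) (Fin p₁ ⊕ Fin p₂) ℝ)
    (hMb : Mb = Matrix.fromBlocks SigS 0 0 SigSC) :
    (βhat - βb) ⬝ᵥ (Mb *ᵥ (βhat - βb)) / a ≤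
      (t / k / (t / k + (1 - t)))^2 + (t * k / (t * k + (1 - t)))^2 / K1 := by
  obtain ⟨ht0, ht1⟩ := ht
  have hk0 : (0:ℝ) < k := lt_trans one_pos hk
  set c1 : ℝ := (t / k + (1 - t))⁻¹ * (1 - t) with hc1
  set c2 : ℝ := (t * k + (1 - t))⁻¹ * (k * t) with hc2
  have hd1 : (0:ℝ) < t / k + (1 - t) := by
    have := div_pos ht0 hk0; linarith
  have hd2 : (0:ℝ) < t * k + (1 - t) := by nlinarith
  have hdiff : βhat - βb = Sum.elim ((c1 - 1) • u) (c2 • v) := by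
    subst hβhat hβb
    funext x
    cases x with
    | inl i => simp [sub_smul]
    | inr j => simp
  have hquad : (βhat - βb) ⬝ᵥ (Mb *ᵥ (βhat - βb))
      = (c1 - 1)^2 * a + c2^2 * b := by
    rw [hdiff, hMb, fromBlocks_mulVec, sumElim_dotProduct_sumElim]
    simp [mulVec_smul, smul_dotProduct, dotProduct_smul, ha, hb, zero_mulVec]
    ring
  have hc1v : (c1 - 1)^2 = (t / k / (t / k + (1 - t)))^2 := by
    have : c1 - 1 = -(t / k / (t / k + (1 - t))) := by
      rw [hc1]; have hd3 : k - k*t + t ≠ 0 := by nlinarith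
      field_simp [hd1.ne', hd2.ne', hk0.ne', hd3]
      ring
    rw [this]; ring
  have hc2v : c2^2 = (t * k / (t * k + (1 - t)))^2 := by
    rw [hc2]; field_simp [hd2.ne']
  rw [hquad, hc1v, hc2v]
  have hba : b / a ≤ 1 / K1 := by
    have h := (le_div_iff₀ hb0).mp hbenign
    rw [div_le_div_iff₀ ha0 hK1]
    nlinarith
  have hX : (0:ℝ) ≤ (t * k / (t * k + (1 - t)))^2 := sq_nonneg _
  have : ((t / k / (t / k + (1 - t)))^2 * a + (t * k / (t * k + (1 - t)))^2 * b) / a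
      = (t / k / (t / k + (1 - t)))^2 + (t * k / (t * k + (1 - t)))^2 * (b / a) := by
    field_simp
  rw [this]
  have h2 : (t * k / (t * k + (1 - t)))^2 * (b / a)
      ≤ (t * k / (t * k + (1 - t)))^2 * (1 / K1) := by
    exact mul_le_mul_of_nonneg_left hba hX
  calc (t / k / (t / k + (1 - t)))^2 + (t * k / (t * k + (1 - t)))^2 * (b / a)
      ≤ (t / k / (t / k + (1 - t)))^2 + (t * k / (t * k + (1 - t)))^2 * (1 / K1) := by linarith
    _ = (t / k / (t / k + (1 - t)))^2 + (t * k / (t * k + (1 - t)))^2 / K1 := by ring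
end

section
/- With the same setup, if additionally the backdoor condition k²b/a ≥ K2 holds for some K2 > 0, then (β̂ - β_a)ᵀ M_a (β̂ - β_a) / (kb) ≤ ((1-t)/(tk + 1-t))² + ((1-t)/(t/k + 1-t))² / K2. -/
open Matrix

theorem stmt_5 (p₁ p₂ : ℕ) (t k K2 : ℝ) (ht : t ∈ Set.Ioo (0:ℝ) 1) (hk : 1 < k)
    (hK2 : 0 < K2)
    (SigS : Matrix (Fin p₁) (Fin p₁) ℝ) (SigSC : Matrix (Fin p₂) (Fin p₂) ℝ)
    (hS : SigS.PosDef) (hSC : SigSC.PosDef)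
    (u : Fin p₁ → ℝ) (v : Fin p₂ → ℝ) (a b : ℝ)
    (ha : a = u ⬝ᵥ (SigS *ᵥ u)) (hb : b = v ⬝ᵥ (SigSC *ᵥ v))
    (ha0 : 0 < a) (hb0 : 0 < b) (hbackdoor : k^2 * b / a ≥ K2)
    (βa : Fin p₁ ⊕ Fin p₂ → ℝ) (hβa : βa = Sum.elim (0 : Fin p₁ → ℝ) v)
    (βhat : Fin p₁ ⊕ Fin p₂ → ℝ)
    (hβhat : βhat = Sum.elim (((t / k + (1 - t))⁻¹ * (1 - t)) • u)
      (((t * k + (1 - t))⁻¹ * (k * t)) • v))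
    (Ma : Matrix (Fin p₁ ⊕ Fin p₂) (Fin p₁ ⊕ Fin p₂) ℝ)
    (hMa : Ma = Matrix.fromBlocks (k⁻¹ • SigS) 0 0 (k • SigSC)) :
    (βhat - βa) ⬝ᵥ (Ma *ᵥ (βhat - βa)) / (k * b) ≤
      ((1 - t) / (t * k + (1 - t)))^2 + ((1 - t) / (t / k + (1 - t)))^2 / K2 := by
  obtain ⟨ht0, ht1⟩ := ht
  have hk0 : (0:ℝ) < k := lt_trans one_pos hk
  set c1 : ℝ := (t / k + (1 - t))⁻¹ * (1 - t) with hc1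
  set c2 : ℝ := (t * k + (1 - t))⁻¹ * (k * t) with hc2
  have hden1 : (0:ℝ) < t / k + (1 - t) := add_pos (div_pos ht0 hk0) (by linarith)
  have hden2 : (0:ℝ) < t * k + (1 - t) := add_pos (mul_pos ht0 hk0) (by linarith)
  have hd : βhat - βa = Sum.elim (c1 • u) ((c2 - 1) • v) := by
    funext i
    cases i with
    | inl i => simp [hβhat, hβa]
    | inr i => simp [hβhat, hβa, sub_smul, one_smul]
  have hquad : (βhat - βa) ⬝ᵥ (Ma *ᵥ (βhat - βa))
      = k⁻¹ * c1^2 * a + k * (c2 - 1)^2 * b := by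
    rw [hd, hMa, fromBlocks_mulVec, sumElim_dotProduct_sumElim]
    simp only [Matrix.zero_mulVec, add_zero, zero_add, Matrix.smul_mulVec,
      Matrix.mulVec_smul, dotProduct_smul, smul_dotProduct, smul_eq_mul, ha, hb,
      Sum.elim_comp_inl, Sum.elim_comp_inr, smul_add, smul_zero, add_zero, zero_add,
      dotProduct_add, smul_smul]
    ring
  have hc2m1 : c2 - 1 = -((1 - t) / (t * k + (1 - t))) := by
    rw [hc2]
    field_simp
    ring
  have hc1' : c1 = (1 - t) / (t / k + (1 - t)) := by
    rw [hc1, inv_mul_eq_div]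
  have hab : a / (k^2 * b) ≤ 1 / K2 := by
    rw [div_le_div_iff₀ (by positivity) hK2]
    have := (le_div_iff₀ ha0).mp hbackdoor
    linarith
  have hkb : (0:ℝ) < k * b := by positivity
  rw [hquad, div_le_iff₀ hkb]
  have key : k⁻¹ * c1^2 * a = c1^2 * (a / (k^2 * b)) * (k * b) := by
    field_simp
  have key2 : k * (c2 - 1)^2 * b = ((1 - t) / (t * k + (1 - t)))^2 * (k * b) := by
    rw [hc2m1]; ring
  rw [key, key2]
  have h1 : c1^2 * (a / (k^2 * b)) ≤ c1^2 * (1 / K2) :=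
    mul_le_mul_of_nonneg_left hab (sq_nonneg _)
  have h2 : c1^2 * (1 / K2) = ((1 - t) / (t / k + (1 - t)))^2 / K2 := by
    rw [hc1']; ring
  nlinarith [mul_le_mul_of_nonneg_right h1 hkb.le]
end
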